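/- Let N ∈ ℕ, m ∈ ℤ with m > N, a ∈ ℕ, q ∈ ℤ with max(0, N-a+m) ≤ q ≤ 2N, and set λ := N+1-a-q. Then for all integers j, d with 0 ≤ j ≤ N and 0 ≤ d ≤ N-j, Σ_{r=0}^{d} C_{j,r}^+ binom(N-j-r, d-r) (∏_{i=0}^{d-r-1}(q-N-m+i)) = D_{j,d}. -/

import Mathlib

noncomputable section

open Polynomial Finset

/-- The space `Pol_b[t]_even`: span of the monomials `t^(b-2i)`, `0 ≤ i ≤ ⌊b/2⌋`
(zero space when `b < 0`). -/
def polEven (b : ℤ) (f : ℂ[X]) : Prop :=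
  ∀ n : ℕ, f.coeff n ≠ 0 → (n : ℤ) ≤ b ∧ (2 : ℤ) ∣ (b - n)

/-- Imaginary Gegenbauer operator `S_ℓ^μ`. -/
def gegenS (μ : ℂ) (ℓ : ℤ) (f : ℂ[X]) : ℂ[X] :=
  -((1 + X ^ 2) * derivative (derivative f)
      + (1 + 2 * C μ) * X * derivative f
      - C ((ℓ : ℂ) * ((ℓ : ℂ) + 2 * μ)) * f)

/-- Euler operator `ϑ_t`. -/
def euler (f : ℂ[X]) : ℂ[X] := X * derivative f

/-- Renormalized Gegenbauer polynomial `C̃_n^μ(z)` for a natural number degree `n`. -/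
def gegenC (μ : ℂ) (n : ℕ) : ℂ[X] :=
  ∑ k ∈ range (n / 2 + 1),
    C ((-1 : ℂ) ^ k / ((k.factorial : ℂ) * ((n - 2 * k).factorial : ℂ)) *
        ∏ s ∈ range (n / 2 - k), (μ + (((n + 1) / 2 : ℕ) : ℂ) + (s : ℂ))) *
      (C 2 * X) ^ (n - 2 * k)

/-- `C̃_ℓ^μ(z)` for `ℓ : ℤ` (zero for `ℓ < 0`). -/
def gegenCZ (μ : ℂ) (ℓ : ℤ) : ℂ[X] := if 0 ≤ ℓ then gegenC μ ℓ.toNat else 0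

/-- `C̃_ℓ^μ(it)`: substitution `z = it`. -/
def gegenCit (μ : ℂ) (ℓ : ℤ) : ℂ[X] := (gegenCZ μ ℓ).comp (C Complex.I * X)

/-- `γ(μ, ℓ)`. -/
def gam (μ : ℂ) (ℓ : ℤ) : ℂ := if ℓ % 2 = 0 then μ + ((ℓ / 2 : ℤ) : ℂ) else 1

/-- `Γ(x+k)/Γ(x)` interpreted as a finite product (reciprocal for `k < 0`). -/
def gratio (x : ℂ) (k : ℤ) : ℂ :=
  if 0 ≤ k then ∏ i ∈ range k.toNat, (x + (i : ℂ))
  else (∏ i ∈ range (-k).toNat, (x + (k : ℂ) + (i : ℂ)))⁻¹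

/-- `Γ(z₁)/Γ(z₂)` at integer arguments, as a finite product. -/
def gq (z₁ z₂ : ℤ) : ℂ := gratio (z₂ : ℂ) (z₁ - z₂)

/-- The set `Λ(N,a,m)`, regarded as a subset of `ℂ`. -/
def LambdaSet (N a : ℕ) (m : ℤ) : Set ℂ :=
  { x | ∃ q : ℤ, max 0 ((N : ℤ) - a + m) ≤ q ∧ q ≤ 2 * N ∧
      x = (N : ℂ) + 1 - (a : ℂ) - (q : ℂ) }

/-- The set `M_ℓ^k`, regarded as a subset of `ℂ`. -/
def Mset (ℓ k : ℤ) : Set ℂ :=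
  { x | ∃ d : ℤ, 0 ≤ d ∧ d ≤ ℓ / 2 - k - 1 ∧ x = -(((ℓ + 1) / 2 : ℤ) : ℂ) - (d : ℂ) }

/-- The solution space `Ξ(λ,a,N,m)` of the system (A_j^±), (B_j^±), realized as
the set of tuples `(f_{-N},…,f_N)`, encoded as functions `ℤ → ℂ[X]` vanishing for `|j| > N`. -/
def XiSet (lam : ℂ) (a N : ℕ) (m : ℤ) : Set (ℤ → ℂ[X]) :=
  { f |
    (∀ j : ℤ, (N : ℤ) < |j| → f j = 0) ∧
    (∀ j : ℤ, |j| ≤ (N : ℤ) → polEven ((a : ℤ) - m + j) (f j)) ∧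
    (∀ j : ℤ, 0 ≤ j → j ≤ (N : ℤ) →
      gegenS (lam + (j : ℂ) - 1) ((a : ℤ) + m - j) (f j)
        - C (2 * ((N : ℂ) - (j : ℂ))) * derivative (f (j + 1)) = 0) ∧
    (∀ j : ℤ, 0 ≤ j → j ≤ (N : ℤ) →
      gegenS (lam + (j : ℂ) - 1) ((a : ℤ) - m - j) (f (-j))
        + C (2 * ((N : ℂ) - (j : ℂ))) * derivative (f (-j - 1)) = 0) ∧
    (∀ j : ℤ, 1 ≤ j → j ≤ (N : ℤ) →
      C (2 * (-(m : ℂ)) * (lam + (a : ℂ) - 1)) * f j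
        + C (2 * (j : ℂ)) * (C (lam - 1) * f j + euler (f j))
        + C ((N : ℂ) - (j : ℂ)) * derivative (f (j + 1))
        + C ((N : ℂ) + (j : ℂ)) * derivative (f (j - 1)) = 0) ∧
    (∀ j : ℤ, 1 ≤ j → j ≤ (N : ℤ) →
      C (2 * (m : ℂ) * (lam + (a : ℂ) - 1)) * f (-j)
        + C (2 * (j : ℂ)) * (C (lam - 1) * f (-j) + euler (f (-j)))
        - C ((N : ℂ) + (j : ℂ)) * derivative (f (-j + 1))
        - C ((N : ℂ) - (j : ℂ)) * derivative (f (-j - 1)) = 0) }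

/-- The constant `C_{j,r}^+`. -/
def Cp (lam : ℂ) (a N : ℕ) (m : ℤ) (j r : ℕ) : ℂ :=
  ((N - j).choose r : ℂ) * (((2 * N - r).factorial : ℂ) / ((N + j).factorial : ℂ)) *
    (∏ i ∈ range r, ((N : ℂ) - (m : ℂ) - (i : ℂ))) *
    (∏ i ∈ range r, (lam + (a : ℂ) - (N : ℂ) - 1 + (i : ℂ)))

/-- The constant `C_{j,r}^-`. -/
def Cm (lam : ℂ) (a N : ℕ) (m : ℤ) (j r : ℕ) : ℂ :=
  ((N - j).choose r : ℂ) * (((2 * N - r).factorial : ℂ) / ((N + j).factorial : ℂ)) *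
    (∏ i ∈ range r, ((N : ℂ) + (m : ℂ) - (i : ℂ))) *
    (∏ i ∈ range r, (lam + (a : ℂ) - (N : ℂ) - 1 + (i : ℂ)))

/-- The gamma factor `Γ_j^+`. -/
def GammaP (lam : ℂ) (a N : ℕ) (m : ℤ) (j : ℕ) : ℂ :=
  ∏ d ∈ range (N - j), gam (lam + (N : ℂ) - 1) ((a : ℤ) + m - (N : ℤ) - ((d : ℤ) + 1))

/-- The gamma factor `Γ_j^-`. -/
def GammaM (lam : ℂ) (a N : ℕ) (m : ℤ) (j : ℕ) : ℂ :=
  ∏ d ∈ range (N - j), gam (lam + (N : ℂ) - 1) ((a : ℤ) - m - (N : ℤ) - ((d : ℤ) + 1))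

/-- The constant `D_{j,r}` (with parameter `q`). -/
def Dc (N : ℕ) (m q : ℤ) (j r : ℕ) : ℂ :=
  ((N - j).choose r : ℂ) * (((2 * N - r).factorial : ℂ) / ((N + j).factorial : ℂ)) *
    (∏ i ∈ range r, ((N : ℂ) + (m : ℂ) - (i : ℂ))) *
    (∏ i ∈ range r, ((q : ℂ) - 2 * (N : ℂ) + (i : ℂ)))

/-- Binomial coefficient with integer upper argument: `binom(x,k) = (∏_{i<k}(x-i))/k!`. -/
def zbinom (x : ℤ) (k : ℕ) : ℂ := (∏ i ∈ range k, ((x : ℂ) - (i : ℂ))) / (k.factorial : ℂ)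

/-- The gamma factor `Γ(d,r)` of the paper (for integral `λ = λz`, `ν = νz`). -/
def GammaAB (N : ℕ) (m lamz nuz : ℤ) (d r : ℕ) : ℂ :=
  (d.choose r : ℂ) *
    gq (lamz + (nuz - lamz - m + (N : ℤ) - (d : ℤ) - 1) / 2)
       (lamz + (nuz - lamz - m - 1) / 2) *
    (((2 * N - r).factorial : ℂ) / (N.factorial : ℂ)) *
    (∏ i ∈ range r, ((N : ℂ) + (m : ℂ) - (i : ℂ)))

/-- The constant `A(d,r)` of the paper (for integral `λ = λz`, `ν = νz`). -/
def Acoef (N : ℕ) (m lamz nuz : ℤ) (d r : ℕ) : ℂ :=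
  (-1 : ℂ) ^ (nuz - 1) * GammaAB N m lamz nuz d r *
    gq (lamz + (-nuz - lamz - m + (N : ℤ) - (d : ℤ) + 1) / 2)
       (lamz + (nuz - lamz - m + (N : ℤ) - (d : ℤ) - 1) / 2) *
    ∏ i ∈ range r, ((N : ℂ) + (nuz : ℂ) - ((i : ℂ) + 1))

/-- The constant `B(d,r)` of the paper (for integral `λ = λz`, `ν = νz`). -/
def Bcoef (N : ℕ) (m lamz nuz : ℤ) (d r : ℕ) : ℂ :=
  (-1 : ℂ) ^ ((d : ℤ) - (N : ℤ)) * GammaAB N m lamz nuz (2 * N - d) r *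
    ∏ i ∈ range r, ((N : ℂ) - (nuz : ℂ) + 2 - ((i : ℂ) + 1))

/-- The predicate `(E_j^+)` on `f_j`. -/
def Eplus (lam : ℂ) (a N : ℕ) (m : ℤ) (qp : ℂ) (j : ℕ) (fj : ℂ[X]) : Prop :=
  C ((-Complex.I) ^ (N - j) * (((2 * N).factorial : ℂ) / ((N + j).factorial : ℂ)) *
      GammaP lam a N m j) * fj
    = C qp * ∑ r ∈ range (N - j + 1),
        C (Cp lam a N m j r) *
          gegenCit (lam + (N : ℂ) - 1 - (r : ℂ)) ((a : ℤ) + m - 2 * (N : ℤ) + (j : ℤ) + 2 * (r : ℤ))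

/-- The predicate `(E_j^-)` on `f_{-j}`. -/
def Eminus (lam : ℂ) (a N : ℕ) (m : ℤ) (qm : ℂ) (j : ℕ) (fj : ℂ[X]) : Prop :=
  C (Complex.I ^ (N - j) * (((2 * N).factorial : ℂ) / ((N + j).factorial : ℂ)) *
      GammaM lam a N m j) * fj
    = C qm * ∑ r ∈ range (N - j + 1),
        C (Cm lam a N m j r) *
          gegenCit (lam + (N : ℂ) - 1 - (r : ℂ)) ((a : ℤ) - m - 2 * (N : ℤ) + (j : ℤ) + 2 * (r : ℤ))

/-- The constant `C_{0,r}(m')` with integer parameter `a`. -/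
def C0r (lam : ℂ) (N : ℕ) (a m' : ℤ) (r : ℕ) : ℂ :=
  (N.choose r : ℂ) * (((2 * N - r).factorial : ℂ) / (N.factorial : ℂ)) *
    (∏ i ∈ range r, ((N : ℂ) - (m' : ℂ) - (i : ℂ))) *
    (∏ i ∈ range r, (lam + (a : ℂ) - (N : ℂ) - 1 + (i : ℂ)))

/-- `α(λ,N,a,m')`. -/
def alphaF (lam : ℂ) (N : ℕ) (a m' : ℤ) : ℂ :=
  ∑ r ∈ range (N + 1), (-1 : ℂ) ^ r * C0r lam N a m' r *
    ∏ i ∈ range (N - r), ((((a + m') / 2 : ℤ) : ℂ) - ((i : ℂ) + 1))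

/-- `β(λ,N,a,m')`. -/
def betaF (lam : ℂ) (N : ℕ) (a m' : ℤ) : ℂ :=
  ∑ r ∈ range (N + 1), (-1 : ℂ) ^ r * C0r lam N a m' r *
    ∏ i ∈ range (N - r), ((((a + m' + 2) / 2 : ℤ) : ℂ) - ((i : ℂ) + 1))

/-- The polynomial function `P(λ)`. -/
def Pf (N : ℕ) (a m : ℤ) (lam : ℂ) : ℂ :=
  (lam + (((a + m - 1) / 2 : ℤ) : ℂ)) * (((a + m) / 2 : ℤ) : ℂ) *
      alphaF lam N a m * betaF lam N a (-m)
    - (lam + (((a - m - 1) / 2 : ℤ) : ℂ)) * (((a - m) / 2 : ℤ) : ℂ) *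
      alphaF lam N a (-m) * betaF lam N a m

/-- The polynomial function `Q(λ)`. -/
def Qf (N : ℕ) (a m : ℤ) (lam : ℂ) : ℂ :=
  (∏ i ∈ range (N + 1), ((m : ℂ) + (i : ℂ))) *
    (∏ i ∈ range N, (((i : ℂ) + 1) - (m : ℂ))) *
    ∏ q ∈ range (2 * N + 1), (lam - (N : ℂ) - 1 + (a : ℂ) + (q : ℂ))

/-- `α̃(a,m')`. -/
def alphaTilde (N q : ℕ) (a m' : ℤ) : ℂ :=
  ∑ r ∈ range (min q N + 1),
    (N.choose r : ℂ) * (((2 * N - r).factorial : ℂ) / ((2 * N - q).factorial : ℂ)) *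
      ((q.factorial : ℂ) / ((q - r).factorial : ℂ)) *
      (∏ i ∈ range r, ((N : ℂ) - (m' : ℂ) - (i : ℂ))) *
      (∏ i ∈ Finset.Ico r q, ((((a + m') / 2 : ℤ) : ℂ) - (N : ℂ) + (i : ℂ)))

/-- The explicit generating tuple of `Ξ(λ,a,N,m)` of Theorem 4.3 (statement 1). -/
def F1 (N a : ℕ) (m q : ℤ) : ℤ → ℂ[X] := fun j =>
  let lamz : ℤ := (N : ℤ) + 1 - a - q
  let nuz : ℤ := (N : ℤ) + 1 - q
  let lam : ℂ := (lamz : ℂ)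
  if 1 ≤ j ∧ j ≤ (N : ℤ) then
    C (Complex.I ^ (-j) * (-1 : ℂ) ^ (nuz - 1)) *
      ∑ r ∈ range (N - j.toNat + 1),
        C ((-1 : ℂ) ^ r * Acoef N m lamz nuz (N - j.toNat) r) *
          gegenCit (lam + (N : ℂ) - 1 - (r : ℂ))
            ((a : ℤ) - m + j + 2 * (1 - (N : ℤ) - nuz + (r : ℤ)))
  else if -(N : ℤ) ≤ j ∧ j ≤ 0 then
    C (Complex.I ^ j) *
      ∑ r ∈ range (N - (-j).toNat + 1),
        C ((-1 : ℂ) ^ r * Bcoef N m lamz nuz (N + (-j).toNat) r) *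
          gegenCit (lam + (N : ℂ) - 1 - (r : ℂ))
            ((a : ℤ) - m + (-j) - 2 * (N : ℤ) + 2 * (r : ℤ))
  else 0

/-- The explicit tuple of statement 16. -/
def F16 (N a : ℕ) (m q : ℤ) : ℤ → ℂ[X] := fun j =>
  let lam : ℂ := (N : ℂ) + 1 - (a : ℂ) - (q : ℂ)
  if 1 ≤ j ∧ j ≤ (N : ℤ) then
    C ((-Complex.I) ^ j.toNat * (((N + j.toNat).factorial : ℂ) / (N.factorial : ℂ)) *
        gratio (lam + ((((a : ℤ) - m - 1) / 2 : ℤ) : ℂ))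
          (((a : ℤ) - m + j - 1) / 2 + q - (N : ℤ) - ((a : ℤ) - m - 1) / 2)) *
      ∑ r ∈ range (N - j.toNat + 1),
        C (Dc N m q j.toNat r) *
          gegenCit (lam + (N : ℂ) - 1 - (r : ℂ))
            ((a : ℤ) - m + j + 2 * (q - 2 * (N : ℤ) + (r : ℤ)))
  else if -(N : ℤ) ≤ j ∧ j ≤ 0 then
    C (Complex.I ^ (-j).toNat * (((N + (-j).toNat).factorial : ℂ) / (N.factorial : ℂ)) *
        gratio (lam + ((((a : ℤ) - m - 1) / 2 : ℤ) : ℂ))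
          (((a : ℤ) - m + (-j) - 1) / 2 - ((a : ℤ) - m - 1) / 2)) *
      ∑ r ∈ range (N - (-j).toNat + 1),
        C (Cm lam a N m (-j).toNat r) *
          gegenCit (lam + (N : ℂ) - 1 - (r : ℂ))
            ((a : ℤ) - m - 2 * (N : ℤ) + (-j) + 2 * (r : ℤ))
  else 0

/-! ### Auxiliary material for `stmt14` -/

/-- The Saalschütz summand. -/
def auxT (x y z : ℂ) (d r : ℕ) : ℂ :=
  (d.choose r : ℂ) * (∏ i ∈ range r, (x - (i : ℂ))) * (∏ i ∈ range r, ((i : ℂ) - y)) *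
    (∏ i ∈ range (d - r), (z - (r : ℂ) - (i : ℂ))) *
    (∏ i ∈ range (d - r), (y - z + x + (i : ℂ)))

/-- The telescoping certificate. -/
def auxG (x y z : ℂ) (d : ℕ) : ℕ → ℂ
  | 0 => 0
  | s + 1 => -(x - (s : ℂ)) * ((s : ℂ) - y) * auxT x y z d s

lemma auxT_top (x y z : ℂ) (d : ℕ) : auxT x y z d (d + 1) = 0 := by
  simp [auxT, Nat.choose_succ_self]

lemma auxStep0 (x y z : ℂ) (d : ℕ) :
    auxT x y z (d + 1) 0
      = (z - x - (d : ℂ)) * (y - z + (d : ℂ)) * auxT x y z d 0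
        + (auxG x y z d 1 - auxG x y z d 0) := by
  simp only [auxT, auxG, Nat.choose_zero_right, Nat.sub_zero]
  rw [prod_range_succ, prod_range_succ]
  push_cast
  ring

lemma auxStepB (x y z : ℂ) (d : ℕ) :
    auxT x y z (d + 1) (d + 1)
      = (z - x - (d : ℂ)) * (y - z + (d : ℂ)) * auxT x y z d (d + 1)
        + (auxG x y z d (d + 2) - auxG x y z d (d + 1)) := by
  have h0 : auxT x y z d (d + 1) = 0 := auxT_top x y z d
  simp only [auxG, h0, mul_zero, zero_add, zero_sub]
  simp only [auxT, Nat.choose_self, Nat.sub_self, prod_range_zero, Nat.cast_one]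
  rw [prod_range_succ, prod_range_succ]
  push_cast
  ring

lemma auxStepA (x y z : ℂ) (s k : ℕ) :
    auxT x y z (s + k + 2) (s + 1)
      = (z - x - ((s + k + 1 : ℕ) : ℂ)) * (y - z + ((s + k + 1 : ℕ) : ℂ)) *
          auxT x y z (s + k + 1) (s + 1)
        + (auxG x y z (s + k + 1) (s + 2) - auxG x y z (s + k + 1) (s + 1)) := by
  have h1 : s + k + 2 - (s + 1) = k + 1 := by omega
  have h2 : s + k + 1 - (s + 1) = k := by omega
  have h3 : s + k + 1 - s = k + 1 := by omega
  have hc1 : (((s + k + 2).choose (s + 1) : ℕ) : ℂ)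
      = (((s + k + 1).choose s : ℕ) : ℂ) + (((s + k + 1).choose (s + 1) : ℕ) : ℂ) := by
    have := Nat.choose_succ_succ' (s + k + 1) s
    exact_mod_cast congrArg (Nat.cast : ℕ → ℂ) this
  have hc2 : (((s + k + 1).choose (s + 1) : ℕ) : ℂ) * ((s : ℂ) + 1)
      = (((s + k + 1).choose s : ℕ) : ℂ) * ((k : ℂ) + 1) := by
    have := Nat.choose_succ_right_eq (s + k + 1) s
    rw [h3] at this
    exact_mod_cast congrArg (Nat.cast : ℕ → ℂ) this
  have e4 : ∏ i ∈ range (k + 1), (z - (s : ℂ) - (i : ℂ))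
      = (z - (s : ℂ)) * ∏ i ∈ range k, (z - ((s + 1 : ℕ) : ℂ) - (i : ℂ)) := by
    rw [prod_range_succ', mul_comm]
    congr 1
    · push_cast; ring
    · exact prod_congr rfl fun i _ => by push_cast; ring
  simp only [auxT, auxG, h1, h2, h3]
  rw [e4, prod_range_succ (f := fun i : ℕ => x - (i : ℂ)),
    prod_range_succ (f := fun i : ℕ => (i : ℂ) - y),
    prod_range_succ (f := fun i : ℕ => z - ((s + 1 : ℕ) : ℂ) - (i : ℂ)),
    prod_range_succ (f := fun i : ℕ => y - z + x + (i : ℂ))]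
  push_cast
  linear_combination
    ((∏ i ∈ range s, (x - (i : ℂ))) * (x - s) * (∏ i ∈ range s, ((i : ℂ) - y)) * ((s : ℂ) - y) *
        (∏ i ∈ range k, (z - ((s : ℂ) + 1) - (i : ℂ))) * (z - ((s : ℂ) + 1) - (k : ℂ)) *
        (∏ i ∈ range k, (y - z + x + (i : ℂ))) * (y - z + x + (k : ℂ))) * hc1
    + ((∏ i ∈ range s, (x - (i : ℂ))) * (x - s) * (∏ i ∈ range s, ((i : ℂ) - y)) * ((s : ℂ) - y) *
        (∏ i ∈ range k, (z - ((s : ℂ) + 1) - (i : ℂ))) *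
        (∏ i ∈ range k, (y - z + x + (i : ℂ))) * (y - z + x + (k : ℂ))) * hc2

lemma auxStep (x y z : ℂ) (d r : ℕ) (hr : r ≤ d + 1) :
    auxT x y z (d + 1) r
      = (z - x - (d : ℂ)) * (y - z + (d : ℂ)) * auxT x y z d r
        + (auxG x y z d (r + 1) - auxG x y z d r) := by
  match r with
  | 0 => exact auxStep0 x y z d
  | s + 1 =>
    rcases Nat.lt_or_ge s d with h | h
    · obtain ⟨k, rfl⟩ : ∃ k, d = s + k + 1 := ⟨d - s - 1, by omega⟩
      exact auxStepA x y z s k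
    · have hs : s = d := by omega
      subst hs
      exact auxStepB x y z s

lemma auxKey (x y z : ℂ) (d : ℕ) :
    ∑ r ∈ range (d + 1), auxT x y z d r
      = (∏ i ∈ range d, (z - x - (i : ℂ))) * (∏ i ∈ range d, (y - z + (i : ℂ))) := by
  induction d with
  | zero => simp [auxT]
  | succ d ih =>
    calc ∑ r ∈ range (d + 2), auxT x y z (d + 1) r
        = ∑ r ∈ range (d + 2),
            ((z - x - (d : ℂ)) * (y - z + (d : ℂ)) * auxT x y z d r
              + (auxG x y z d (r + 1) - auxG x y z d r)) := by
          refine sum_congr rfl fun r hr => ?_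
          exact auxStep x y z d r (by simpa [Nat.lt_succ_iff] using mem_range.mp hr)
      _ = (z - x - (d : ℂ)) * (y - z + (d : ℂ)) * ∑ r ∈ range (d + 2), auxT x y z d r
            + (auxG x y z d (d + 2) - auxG x y z d 0) := by
          rw [sum_add_distrib, ← mul_sum, sum_range_sub]
      _ = (∏ i ∈ range (d + 1), (z - x - (i : ℂ))) * ∏ i ∈ range (d + 1), (y - z + (i : ℂ)) := by
          rw [sum_range_succ, auxT_top, add_zero, ih]
          have : auxG x y z d (d + 2) = 0 := by
            show -(x - ((d + 1 : ℕ) : ℂ)) * (((d + 1 : ℕ) : ℂ) - y) * auxT x y z d (d + 1) = 0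
            rw [auxT_top]; ring
          rw [this, prod_range_succ, prod_range_succ]
          show _ = _
          simp only [auxG]
          ring

lemma cast_descFact (n k : ℕ) (h : k ≤ n) :
    ((n.descFactorial k : ℕ) : ℂ) = ∏ i ∈ range k, ((n : ℂ) - (i : ℂ)) := by
  induction k with
  | zero => simp
  | succ k ih =>
    rw [Nat.descFactorial_succ, prod_range_succ, ← ih (by omega)]
    push_cast [Nat.cast_sub (show k ≤ n by omega)]
    ring

lemma nat_combo (N j r d : ℕ) (hj : j ≤ N) (hr : r ≤ d) (hd : d ≤ N - j) :
    (N - j).choose r * (N - j - r).choose (d - r) * (2 * N - r).factorial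
      = (N - j).choose d * d.choose r *
          ((2 * N - d).factorial * (2 * N - r).descFactorial (d - r)) := by
  have h1 : (N - j).choose d * d.choose r = (N - j).choose r * (N - j - r).choose (d - r) :=
    Nat.choose_mul hr
  have h2 : (2 * N - d).factorial * (2 * N - r).descFactorial (d - r) = (2 * N - r).factorial := by
    have h3 : d - r ≤ 2 * N - r := by omega
    have := Nat.factorial_mul_descFactorial h3
    rwa [show 2 * N - r - (d - r) = 2 * N - d by omega] at this
  rw [h1, h2]

/-- the identity `Σ_r C_{j,r}^+ binom(N-j-r, d-r) ∏ (q-N-m+i) = D_{j,d}`. -/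
theorem stmt14 (N a : ℕ) (m : ℤ) (hm : (N : ℤ) < m) (q : ℤ)
    (hq1 : max 0 ((N : ℤ) - a + m) ≤ q) (hq2 : q ≤ 2 * N) :
    ∀ j d : ℕ, j ≤ N → d ≤ N - j →
      ∑ r ∈ Finset.range (d + 1),
        Cp ((N : ℂ) + 1 - (a : ℂ) - (q : ℂ)) a N m j r *
          ((N - j - r).choose (d - r) : ℂ) *
          (∏ i ∈ Finset.range (d - r), ((q : ℂ) - (N : ℂ) - (m : ℂ) + (i : ℂ)))
      = Dc N m q j d := by
  intro j d hj hd
  have hterm : ∀ r ∈ Finset.range (d + 1),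
      Cp ((N : ℂ) + 1 - (a : ℂ) - (q : ℂ)) a N m j r *
          ((N - j - r).choose (d - r) : ℂ) *
          (∏ i ∈ Finset.range (d - r), ((q : ℂ) - (N : ℂ) - (m : ℂ) + (i : ℂ)))
        = (((N - j).choose d : ℂ) * (((2 * N - d).factorial : ℂ) / ((N + j).factorial : ℂ))) *
            auxT ((N : ℂ) - (m : ℂ)) (q : ℂ) (2 * (N : ℂ)) d r := by
    intro r hr
    have hrd : r ≤ d := by
      have := Finset.mem_range.mp hr; omega
    have hcast : (((N - j).choose r : ℕ) : ℂ) * (((N - j - r).choose (d - r) : ℕ) : ℂ) *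
          (((2 * N - r).factorial : ℕ) : ℂ)
        = (((N - j).choose d : ℕ) : ℂ) * ((d.choose r : ℕ) : ℂ) *
            ((((2 * N - d).factorial : ℕ) : ℂ) * (((2 * N - r).descFactorial (d - r) : ℕ) : ℂ)) := by
      exact_mod_cast congrArg (Nat.cast : ℕ → ℂ) (nat_combo N j r d hj hrd hd)
    have hdf : (((2 * N - r).descFactorial (d - r) : ℕ) : ℂ)
        = ∏ i ∈ range (d - r), (2 * (N : ℂ) - (r : ℂ) - (i : ℂ)) := by
      rw [cast_descFact _ _ (by omega)]
      refine prod_congr rfl fun i _ => ?_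
      have h2N : ((2 * N - r : ℕ) : ℂ) = 2 * (N : ℂ) - (r : ℂ) := by
        push_cast [Nat.cast_sub (show r ≤ 2 * N by omega)]; ring
      rw [h2N]
    have hpy : ∏ i ∈ range r, ((N : ℂ) + 1 - (a : ℂ) - (q : ℂ) + (a : ℂ) - (N : ℂ) - 1 + (i : ℂ))
        = ∏ i ∈ range r, ((i : ℂ) - (q : ℂ)) :=
      prod_congr rfl fun i _ => by ring
    have hw : ∏ i ∈ Finset.range (d - r), ((q : ℂ) - (N : ℂ) - (m : ℂ) + (i : ℂ))
        = ∏ i ∈ range (d - r), ((q : ℂ) - 2 * (N : ℂ) + ((N : ℂ) - (m : ℂ)) + (i : ℂ)) :=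
      prod_congr rfl fun i _ => by ring
    simp only [Cp, auxT]
    rw [hpy, hw, ← hdf]
    linear_combination ((∏ i ∈ range r, ((N : ℂ) - (m : ℂ) - (i : ℂ))) *
      (∏ i ∈ range r, ((i : ℂ) - (q : ℂ))) *
      (∏ i ∈ range (d - r), ((q : ℂ) - 2 * (N : ℂ) + ((N : ℂ) - (m : ℂ)) + (i : ℂ))) *
      (((N + j).factorial : ℂ))⁻¹) * hcast
  rw [Finset.sum_congr rfl hterm, ← Finset.mul_sum,
    auxKey ((N : ℂ) - (m : ℂ)) (q : ℂ) (2 * (N : ℂ)) d]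
  have hp1 : ∏ i ∈ range d, (2 * (N : ℂ) - ((N : ℂ) - (m : ℂ)) - (i : ℂ))
      = ∏ i ∈ range d, ((N : ℂ) + (m : ℂ) - (i : ℂ)) :=
    prod_congr rfl fun i _ => by ring
  rw [hp1]
  simp only [Dc]
  ring
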